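/- Let v be a stem in a forest T, let R be the set of leaf neighbors of v, and let r = |R| ≥ 1. If r+1 is a triangular number, then s̊(T) ≥ s̊(T − R) + r + u_r. -/

import Mathlib

variable {V : Type} [Fintype V] [DecidableEq V]

/-- The `k`-th triangular number `t_k = C(k+1,2)`. -/
def tri (k : ℕ) : ℕ := (k + 1).choose 2

/-- A natural number is triangular if it equals `t_k` for some `k`. -/
def IsTriangular (m : ℕ) : Prop := ∃ k, m = tri k

/-- `uval r = max {k : t_k ≤ r}`. -/
def uval (r : ℕ) : ℕ := Nat.findGreatest (fun k => tri k ≤ r) r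

open Classical in
/-- Sum-color cost (optimal total score of the slow-coloring game) of the subgraph
of `G` induced by `S`: it is `0` when there are no vertices, and otherwise the maximum
over nonempty marked sets `M ⊆ S` of `|M|` plus the minimum over nonempty independent
subsets `I ⊆ M` of the sum-color cost of the graph with `I` deleted. -/
noncomputable def scost (G : SimpleGraph V) (S : Finset V) : ℕ :=
  if S = ∅ then 0
  else
    (S.powerset.erase ∅).attach.sup fun M =>
      M.1.card +
      WithBot.unbotD 0
        ((((M.1.powerset.erase ∅).filter
              fun I => ∀ x ∈ I, ∀ y ∈ I, ¬ G.Adj x y).attach.image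
            fun I => scost G (S \ I.1)).min)
termination_by S.card
decreasing_by
  · have hI := I.2
    have hM := M.2
    simp only [Finset.mem_filter, Finset.mem_erase, Finset.mem_powerset] at hI hM
    have hsub : I.1 ⊆ S := hI.1.2.trans hM.2
    have hne : I.1.Nonempty := Finset.nonempty_iff_ne_empty.mpr hI.1.1
    exact Finset.card_lt_card (Finset.sdiff_ssubset hsub hne)

/-- A vertex is a leaf if it has exactly one neighbor. -/
def IsLeaf (G : SimpleGraph V) (v : V) : Prop := (G.neighborSet v).ncard = 1

/-- A stem in a forest: a vertex with at least one leaf neighbor and at most one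
non-leaf neighbor. -/
def IsStem (G : SimpleGraph V) (v : V) : Prop :=
  (∃ w, G.Adj v w ∧ IsLeaf G w) ∧ {w | G.Adj v w ∧ ¬ IsLeaf G w}.ncard ≤ 1

open Classical in
lemma scost_eq (G : SimpleGraph V) (S : Finset V) (hS : S ≠ ∅) :
    scost G S = (S.powerset.erase ∅).attach.sup fun M =>
      M.1.card +
      WithBot.unbotD 0
        ((((M.1.powerset.erase ∅).filter
              fun I => ∀ x ∈ I, ∀ y ∈ I, ¬ G.Adj x y).attach.image
            fun I => scost G (S \ I.1)).min) := by
  rw [scost]; simp [hS]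

lemma scost_empty (G : SimpleGraph V) : scost G ∅ = 0 := by rw [scost]; simp

/-- Independence of a finset. -/
def Indep (G : SimpleGraph V) (I : Finset V) : Prop := ∀ x ∈ I, ∀ y ∈ I, ¬ G.Adj x y

lemma unbot'_min_le {s : Finset ℕ} {a : ℕ} (ha : a ∈ s) : WithBot.unbotD 0 s.min ≤ a := by
  have h := Finset.min_le ha
  cases hmin : s.min with
  | top => exact Nat.zero_le a
  | coe b => rw [hmin] at h; exact_mod_cast h

lemma exists_min_eq {s : Finset ℕ} (hs : s.Nonempty) : ∃ a ∈ s, WithBot.unbotD 0 s.min = a := by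
  refine ⟨s.min' hs, Finset.min'_mem s hs, ?_⟩
  rw [← Finset.coe_min' hs]; rfl

open Classical in
lemma filter_indep_nonempty (G : SimpleGraph V) {M : Finset V} (hM : M ≠ ∅) :
    ((M.powerset.erase ∅).filter fun I => ∀ x ∈ I, ∀ y ∈ I, ¬ G.Adj x y).Nonempty := by
  obtain ⟨x, hx⟩ := Finset.nonempty_iff_ne_empty.mpr hM
  refine ⟨{x}, ?_⟩
  simp only [Finset.mem_filter, Finset.mem_erase, Finset.mem_powerset]
  refine ⟨⟨Finset.singleton_ne_empty x, Finset.singleton_subset_iff.mpr hx⟩, ?_⟩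
  intro a ha b hb
  simp only [Finset.mem_singleton] at ha hb
  subst ha; subst hb
  exact G.irrefl

open Classical in
lemma scost_ge (G : SimpleGraph V) {S M : Finset V} (hMS : M ⊆ S) (hM : M ≠ ∅) {B : ℕ}
    (h : ∀ I ⊆ M, I ≠ ∅ → Indep G I → B ≤ M.card + scost G (S \ I)) :
    B ≤ scost G S := by
  have hS : S ≠ ∅ := fun hS => hM (Finset.subset_empty.mp (hS ▸ hMS))
  rw [scost_eq G S hS]
  have hMmem : M ∈ S.powerset.erase ∅ := by
    simp [Finset.mem_erase, Finset.mem_powerset, hM, hMS]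
  refine le_trans ?_ (Finset.le_sup (Finset.mem_attach _ ⟨M, hMmem⟩))
  set T := (M.powerset.erase ∅).filter fun I => ∀ x ∈ I, ∀ y ∈ I, ¬ G.Adj x y with hT
  have hTne : T.Nonempty := filter_indep_nonempty G hM
  have himg : (T.attach.image fun I => scost G (S \ I.1)).Nonempty :=
    (hTne.attach).image _
  obtain ⟨a, hamem, haeq⟩ := exists_min_eq himg
  rw [haeq]
  obtain ⟨I, _, hIeq⟩ := Finset.mem_image.mp hamem
  have hI2 := I.2
  simp only [hT, Finset.mem_filter, Finset.mem_erase, Finset.mem_powerset] at hI2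
  have hB := h I.1 hI2.1.2 hI2.1.1 hI2.2
  rw [hIeq] at hB
  exact hB

open Classical in
lemma scost_response (G : SimpleGraph V) {S M : Finset V} (hMS : M ⊆ S) (hM : M ≠ ∅) :
    ∃ I, I ⊆ M ∧ I ≠ ∅ ∧ Indep G I ∧ M.card + scost G (S \ I) ≤ scost G S := by
  have hS : S ≠ ∅ := fun hS => hM (Finset.subset_empty.mp (hS ▸ hMS))
  have hMmem : M ∈ S.powerset.erase ∅ := by
    simp [Finset.mem_erase, Finset.mem_powerset, hM, hMS]
  have hle := Finset.le_sup (f := fun (M : {x // x ∈ S.powerset.erase ∅}) =>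
      M.1.card + WithBot.unbotD 0 ((((M.1.powerset.erase ∅).filter
          fun I => ∀ x ∈ I, ∀ y ∈ I, ¬ G.Adj x y).attach.image
        fun I => scost G (S \ I.1)).min)) (Finset.mem_attach _ ⟨M, hMmem⟩)
  rw [← scost_eq G S hS] at hle
  set T := (M.powerset.erase ∅).filter fun I => ∀ x ∈ I, ∀ y ∈ I, ¬ G.Adj x y with hT
  have hTne : T.Nonempty := filter_indep_nonempty G hM
  have himg : (T.attach.image fun I => scost G (S \ I.1)).Nonempty :=
    (hTne.attach).image _
  obtain ⟨a, hamem, haeq⟩ := exists_min_eq himg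
  obtain ⟨I, _, hIeq⟩ := Finset.mem_image.mp hamem
  have hI2 := I.2
  simp only [hT, Finset.mem_filter, Finset.mem_erase, Finset.mem_powerset] at hI2
  refine ⟨I.1, hI2.1.2, hI2.1.1, hI2.2, ?_⟩
  calc M.card + scost G (S \ I.1) = M.card + a := by rw [hIeq]
    _ = M.card + WithBot.unbotD 0 ((T.attach.image fun I => scost G (S \ I.1)).min) := by
        rw [haeq]
    _ ≤ scost G S := hle

open Classical in
lemma scost_optimal (G : SimpleGraph V) {S : Finset V} (hS : S ≠ ∅) :
    ∃ M, M ⊆ S ∧ M ≠ ∅ ∧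
      ∀ I ⊆ M, I ≠ ∅ → Indep G I → scost G S ≤ M.card + scost G (S \ I) := by
  have h := scost_eq G S hS
  have hne : (S.powerset.erase ∅).attach.Nonempty := by
    refine Finset.attach_nonempty_iff.mpr ⟨S, ?_⟩
    simp [Finset.mem_erase, Finset.mem_powerset, hS]
  obtain ⟨M, _, hMeq⟩ := Finset.exists_mem_eq_sup _ hne (fun M =>
      M.1.card + WithBot.unbotD 0 ((((M.1.powerset.erase ∅).filter
          fun I => ∀ x ∈ I, ∀ y ∈ I, ¬ G.Adj x y).attach.image
        fun I => scost G (S \ I.1)).min))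
  have hM2 := M.2
  simp only [Finset.mem_erase, Finset.mem_powerset] at hM2
  refine ⟨M.1, hM2.2, hM2.1, fun I hIM hIne hIind => ?_⟩
  rw [h, hMeq]
  have hImem : I ∈ (M.1.powerset.erase ∅).filter fun I => ∀ x ∈ I, ∀ y ∈ I, ¬ G.Adj x y := by
    simp only [Finset.mem_filter, Finset.mem_erase, Finset.mem_powerset]
    exact ⟨⟨hIne, hIM⟩, hIind⟩
  have : scost G (S \ I) ∈ (((M.1.powerset.erase ∅).filter
      fun I => ∀ x ∈ I, ∀ y ∈ I, ¬ G.Adj x y).attach.image fun I => scost G (S \ I.1)) :=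
    Finset.mem_image.mpr ⟨⟨I, hImem⟩, Finset.mem_attach _ _, rfl⟩
  exact Nat.add_le_add_left (unbot'_min_le this) _

open Classical in
lemma scost_le_of (G : SimpleGraph V) {S : Finset V} (hS : S ≠ ∅) {B : ℕ}
    (h : ∀ M ⊆ S, M ≠ ∅ → ∃ I, I ⊆ M ∧ I ≠ ∅ ∧ Indep G I ∧ M.card + scost G (S \ I) ≤ B) :
    scost G S ≤ B := by
  rw [scost_eq G S hS]
  refine Finset.sup_le fun M _ => ?_
  have hM2 := M.2
  simp only [Finset.mem_erase, Finset.mem_powerset] at hM2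
  obtain ⟨I, hIM, hIne, hIind, hIle⟩ := h M.1 hM2.2 hM2.1
  have hImem : I ∈ (M.1.powerset.erase ∅).filter fun I => ∀ x ∈ I, ∀ y ∈ I, ¬ G.Adj x y := by
    simp only [Finset.mem_filter, Finset.mem_erase, Finset.mem_powerset]
    exact ⟨⟨hIne, hIM⟩, hIind⟩
  have hmem : scost G (S \ I) ∈ (((M.1.powerset.erase ∅).filter
      fun I => ∀ x ∈ I, ∀ y ∈ I, ¬ G.Adj x y).attach.image fun I => scost G (S \ I.1)) :=
    Finset.mem_image.mpr ⟨⟨I, hImem⟩, Finset.mem_attach _ _, rfl⟩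
  exact le_trans (Nat.add_le_add_left (unbot'_min_le hmem) _) hIle

lemma card_le_scost (G : SimpleGraph V) (S : Finset V) : S.card ≤ scost G S := by
  rcases eq_or_ne S ∅ with h | h
  · simp [h, scost_empty]
  · exact scost_ge G (le_refl S) h fun I _ _ _ => Nat.le_add_right _ _

lemma scost_superadd_aux (G : SimpleGraph V) :
    ∀ n, ∀ S S' : Finset V, S.card ≤ n → S' ⊆ S →
      scost G S' + S.card ≤ scost G S + S'.card := by
  intro n
  induction n with
  | zero =>
    intro S S' hn hsub
    have hS : S = ∅ := Finset.card_eq_zero.mp (Nat.le_zero.mp hn)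
    have hS' : S' = ∅ := Finset.subset_empty.mp (hS ▸ hsub)
    simp [hS, hS', scost_empty]
  | succ n ih =>
    intro S S' hn hsub
    rcases eq_or_ne S' ∅ with h' | h'
    · have := card_le_scost G S
      simp [h', scost_empty]
      omega
    · obtain ⟨M, hMS', hMne, hMopt⟩ := scost_optimal G h'
      have hcard : S'.card ≤ S.card := Finset.card_le_card hsub
      have key : scost G S' + (S.card - S'.card) ≤ scost G S := by
        apply scost_ge G (hMS'.trans hsub) hMne
        intro I hIM hIne hIind
        have hIS' : I ⊆ S' := hIM.trans hMS'
        have hIS : I ⊆ S := hIS'.trans hsub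
        have hIcard : I.card ≤ S'.card := Finset.card_le_card hIS'
        have hIpos : 0 < I.card := Finset.card_pos.mpr (Finset.nonempty_iff_ne_empty.mpr hIne)
        have h1 : scost G S' ≤ M.card + scost G (S' \ I) := hMopt I hIM hIne hIind
        have h2 : scost G (S' \ I) + (S \ I).card ≤ scost G (S \ I) + (S' \ I).card := by
          apply ih
          · have : (S \ I).card = S.card - I.card := Finset.card_sdiff_of_subset hIS
            omega
          · exact Finset.sdiff_subset_sdiff hsub (le_refl I)
        have h3 : (S \ I).card = S.card - I.card := Finset.card_sdiff_of_subset hIS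
        have h4 : (S' \ I).card = S'.card - I.card := Finset.card_sdiff_of_subset hIS'
        omega
      omega

lemma scost_superadd (G : SimpleGraph V) {S S' : Finset V} (hsub : S' ⊆ S) :
    scost G S' + S.card ≤ scost G S + S'.card :=
  scost_superadd_aux G S.card S S' (le_refl _) hsub

open Classical in
lemma scost_pendant_aux (G : SimpleGraph V) :
    ∀ n, ∀ S : Finset V, S.card ≤ n → ∀ v ∈ S,
      (S.filter (fun w => G.Adj v w)).card ≤ 1 →
      scost G S ≤ scost G (S.erase v) + 1 + (S.filter (fun w => G.Adj v w)).card := by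
  intro n
  induction n with
  | zero =>
    intro S hn v hvS _
    exact absurd (Finset.card_pos.mpr ⟨v, hvS⟩) (by omega)
  | succ n ih =>
    intro S hn v hvS hc
    have hSne : S ≠ ∅ := Finset.nonempty_iff_ne_empty.mp ⟨v, hvS⟩
    apply scost_le_of G hSne
    intro M hMS hMne
    by_cases hvM : v ∈ M
    · by_cases hM' : M.erase v = ∅
      · -- M = {v}
        have hMsing : M = {v} := by
          ext x
          simp only [Finset.mem_singleton]
          constructor
          · intro hx
            by_contra hne
            have hxe : x ∈ M.erase v := Finset.mem_erase.mpr ⟨hne, hx⟩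
            rw [hM'] at hxe
            exact absurd hxe (Finset.notMem_empty x)
          · intro hx; subst hx; exact hvM
        refine ⟨{v}, by rw [hMsing], Finset.singleton_ne_empty v, ?_, ?_⟩
        · intro a ha b hb
          simp only [Finset.mem_singleton] at ha hb
          subst ha; subst hb; exact G.irrefl
        · rw [hMsing, ← Finset.erase_eq]
          simp only [Finset.card_singleton]
          omega
      · set M' := M.erase v with hM'def
        have hM'sub : M' ⊆ S.erase v := Finset.erase_subset_erase v hMS
        obtain ⟨I₀, hI₀M', hI₀ne, hI₀ind, hr⟩ := scost_response G hM'sub hM'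
        have hI₀M : I₀ ⊆ M := hI₀M'.trans (Finset.erase_subset v M)
        have hvI₀ : v ∉ I₀ := fun h => (Finset.mem_erase.mp (hI₀M' h)).1 rfl
        have hI₀S : I₀ ⊆ S := hI₀M.trans hMS
        have hMcard : M.card = M'.card + 1 := by
          rw [hM'def, Finset.card_erase_of_mem hvM]
          have : 0 < M.card := Finset.card_pos.mpr ⟨v, hvM⟩
          omega
        have hsdcard : (S \ I₀).card ≤ n := by
          have := Finset.card_lt_card (Finset.sdiff_ssubset hI₀S
            (Finset.nonempty_iff_ne_empty.mpr hI₀ne))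
          omega
        have hvSd : v ∈ S \ I₀ := Finset.mem_sdiff.mpr ⟨hvS, hvI₀⟩
        have herase : (S \ I₀).erase v = S.erase v \ I₀ := by
          rw [Finset.erase_eq, Finset.erase_eq, sdiff_right_comm]
        by_cases hadj : ∃ u ∈ I₀, G.Adj v u
        · obtain ⟨u, huI₀, huadj⟩ := hadj
          have huS : u ∈ S := hI₀S huI₀
          have huf : u ∈ S.filter (fun w => G.Adj v w) := Finset.mem_filter.mpr ⟨huS, huadj⟩
          have hcone : 1 ≤ (S.filter (fun w => G.Adj v w)).card :=
            Finset.card_pos.mpr ⟨u, huf⟩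
          have hfempty : ((S \ I₀).filter (fun w => G.Adj v w)).card = 0 := by
            rw [Finset.card_eq_zero]
            apply Finset.eq_empty_of_forall_notMem
            intro w hw
            rw [Finset.mem_filter, Finset.mem_sdiff] at hw
            have hwf : w ∈ S.filter (fun w => G.Adj v w) :=
              Finset.mem_filter.mpr ⟨hw.1.1, hw.2⟩
            have : w = u := Finset.card_le_one.mp hc w hwf u huf
            exact hw.1.2 (this ▸ huI₀)
          have hih := ih (S \ I₀) hsdcard v hvSd (by rw [hfempty]; omega)
          rw [hfempty, herase] at hih
          exact ⟨I₀, hI₀M, hI₀ne, hI₀ind, by omega⟩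
        · push_neg at hadj
          refine ⟨insert v I₀, Finset.insert_subset hvM hI₀M, Finset.insert_ne_empty v I₀, ?_, ?_⟩
          · intro x hx y hy
            rw [Finset.mem_insert] at hx hy
            rcases hx with rfl | hx <;> rcases hy with rfl | hy
            · exact G.irrefl
            · exact hadj y hy
            · exact fun h => hadj x hx (G.adj_symm h)
            · exact hI₀ind x hx y hy
          · have hsd : S \ insert v I₀ = S.erase v \ I₀ := by
              rw [Finset.sdiff_insert, Finset.erase_eq, Finset.erase_eq, sdiff_right_comm]
            rw [hsd]
            omega
    · have hMsub : M ⊆ S.erase v := Finset.subset_erase.mpr ⟨hMS, hvM⟩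
      obtain ⟨I₀, hI₀M, hI₀ne, hI₀ind, hr⟩ := scost_response G hMsub hMne
      have hI₀S : I₀ ⊆ S := hI₀M.trans hMS
      have hvI₀ : v ∉ I₀ := fun h => hvM (hI₀M h)
      have hvSd : v ∈ S \ I₀ := Finset.mem_sdiff.mpr ⟨hvS, hvI₀⟩
      have hsdcard : (S \ I₀).card ≤ n := by
        have := Finset.card_lt_card (Finset.sdiff_ssubset hI₀S
          (Finset.nonempty_iff_ne_empty.mpr hI₀ne))
        omega
      have herase : (S \ I₀).erase v = S.erase v \ I₀ := by
        rw [Finset.erase_eq, Finset.erase_eq, sdiff_right_comm]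
      have hcsub : ((S \ I₀).filter (fun w => G.Adj v w)).card ≤
          (S.filter (fun w => G.Adj v w)).card :=
        Finset.card_le_card (Finset.filter_subset_filter _ (Finset.sdiff_subset))
      have hih := ih (S \ I₀) hsdcard v hvSd (le_trans hcsub hc)
      rw [herase] at hih
      exact ⟨I₀, hI₀M, hI₀ne, hI₀ind, by omega⟩

open Classical in
lemma scost_pendant (G : SimpleGraph V) {S : Finset V} {v : V} (hvS : v ∈ S)
    (hc : ((S.filter (fun w => G.Adj v w)).card ≤ 1)) :
    scost G S ≤ scost G (S.erase v) + 1 + (S.filter (fun w => G.Adj v w)).card :=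
  scost_pendant_aux G S.card S le_rfl v hvS hc

lemma tri_succ (k : ℕ) : tri (k + 1) = tri k + (k + 1) := by
  have h := Nat.choose_succ_succ (k + 1) 1
  simp only [Nat.choose_one_right, Nat.succ_eq_add_one] at h
  norm_num at h
  simp only [tri]
  omega

lemma le_tri (k : ℕ) : k ≤ tri k := by
  induction k with
  | zero => simp [tri]
  | succ n ih => rw [tri_succ]; omega

lemma tri_mono : Monotone tri :=
  monotone_nat_of_le_succ fun n => by rw [tri_succ]; omega

lemma tri_uval_le (n : ℕ) : tri (uval n) ≤ n :=
  Nat.findGreatest_spec (P := fun k => tri k ≤ n) (Nat.zero_le n) (by simp [tri])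

lemma uval_pos {n : ℕ} (hn : 1 ≤ n) : 1 ≤ uval n :=
  Nat.le_findGreatest (P := fun k => tri k ≤ n) hn (by simpa [tri] using hn)

lemma uval_le {k n : ℕ} (h : n < tri (k + 1)) : uval n ≤ k := by
  by_contra hc
  push_neg at hc
  have h2 : k + 1 ≤ uval n := hc
  exact absurd (le_trans (tri_mono h2) (tri_uval_le n)) (by omega)

open Classical in
lemma key_lemma (G : SimpleGraph V) (v : V) (R : Finset V) (hvR : v ∉ R)
    (hadj : ∀ w ∈ R, G.Adj v w)
    (hpend : ((Finset.univ \ R).filter (fun w => G.Adj v w)).card ≤ 1) :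
    ∀ n, ∀ R' ⊆ R, R'.card ≤ n →
      scost G (Finset.univ \ R) + R'.card + uval (R'.card + 1) ≤
        scost G ((Finset.univ \ R) ∪ R') + 1 := by
  intro n
  induction n with
  | zero =>
    intro R' hR'R hn
    have hR' : R' = ∅ := Finset.card_eq_zero.mp (Nat.le_zero.mp hn)
    subst hR'
    simp only [Finset.card_empty, Finset.union_empty, Nat.zero_add]
    have : uval 1 ≤ 1 := by
      apply uval_le
      simp [tri]
    have h1 : 1 ≤ uval 1 := uval_pos le_rfl
    omega
  | succ n ih =>
    intro R' hR'R hn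
    set s := R'.card with hs
    set m := uval (s + 1) with hm
    have hm1 : 1 ≤ m := uval_pos (by omega)
    have htm : tri m ≤ s + 1 := tri_uval_le (s + 1)
    have hdisjR' : Disjoint (Finset.univ \ R) R' :=
      Finset.disjoint_left.mpr fun a ha haR' =>
        (Finset.mem_sdiff.mp ha).2 (hR'R haR')
    have hcardU : ((Finset.univ \ R) ∪ R').card = (Finset.univ \ R).card + s :=
      Finset.card_union_of_disjoint hdisjR'
    by_cases hm2 : 2 ≤ m
    · -- Lister marks v together with m leaves
      have htm1 : tri ((m - 1) + 1) = tri (m - 1) + ((m - 1) + 1) := tri_succ (m - 1)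
      have hmm : (m - 1) + 1 = m := by omega
      rw [hmm] at htm1
      have hletri : m - 1 ≤ tri (m - 1) := le_tri (m - 1)
      have hms : m ≤ s := by omega
      obtain ⟨R'', hR''R', hR''card⟩ := Finset.exists_subset_card_eq hms
      have hvR'' : v ∉ R'' := fun h => hvR (hR'R (hR''R' h))
      have hvU : v ∈ Finset.univ \ R := Finset.mem_sdiff.mpr ⟨Finset.mem_univ v, hvR⟩
      have hMS : insert v R'' ⊆ (Finset.univ \ R) ∪ R' :=
        Finset.insert_subset (Finset.mem_union_left _ hvU)
          (hR''R'.trans Finset.subset_union_right)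
      have hMcard : (insert v R'').card = m + 1 := by
        rw [Finset.card_insert_of_notMem hvR'', hR''card]
      have hgoal : scost G (Finset.univ \ R) + s + (m - 1) ≤
          scost G ((Finset.univ \ R) ∪ R') := by
        apply scost_ge G hMS (Finset.insert_ne_empty v R'')
        intro I hIM hIne hIind
        by_cases hvI : v ∈ I
        · -- Painter colors v
          have hIv : I = {v} := by
            ext x
            simp only [Finset.mem_singleton]
            constructor
            · intro hx
              by_contra hne
              have hxR'' : x ∈ R'' := by
                rcases Finset.mem_insert.mp (hIM hx) with h | h
                · exact absurd h hne
                · exact h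
              exact hIind v hvI x hx (hadj x (hR'R (hR''R' hxR'')))
            · intro hx; subst hx; exact hvI
          have hvnR' : v ∉ R' := fun h => hvR (hR'R h)
          have hsd : ((Finset.univ \ R) ∪ R') \ I =
              ((Finset.univ \ R).erase v) ∪ R' := by
            rw [hIv, Finset.union_sdiff_distrib, ← Finset.erase_eq,
              Finset.sdiff_singleton_eq_erase, Finset.erase_eq_of_notMem hvnR']
          rw [hsd]
          have h1 := scost_pendant G hvU hpend
          have hdisjE : Disjoint ((Finset.univ \ R).erase v) R' :=
            Finset.disjoint_of_subset_left (Finset.erase_subset _ _) hdisjR'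
          have h2 : scost G ((Finset.univ \ R).erase v) +
              (((Finset.univ \ R).erase v) ∪ R').card ≤
              scost G (((Finset.univ \ R).erase v) ∪ R') +
              ((Finset.univ \ R).erase v).card :=
            scost_superadd G Finset.subset_union_left
          have h3 : (((Finset.univ \ R).erase v) ∪ R').card =
              ((Finset.univ \ R).erase v).card + s :=
            Finset.card_union_of_disjoint hdisjE
          omega
        · -- Painter colors leaves only
          have hIR'' : I ⊆ R'' := fun x hx => by
            rcases Finset.mem_insert.mp (hIM hx) with h | h
            · exact absurd (h ▸ hx) hvI
            · exact h
          have hIR' : I ⊆ R' := hIR''.trans hR''R'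
          have hdisjI : Disjoint (Finset.univ \ R) I :=
            Finset.disjoint_of_subset_right hIR' hdisjR'
          have hsd2 : ((Finset.univ \ R) ∪ R') \ I = (Finset.univ \ R) ∪ (R' \ I) := by
            rw [Finset.union_sdiff_distrib, Finset.sdiff_eq_self_of_disjoint hdisjI]
          rw [hsd2]
          have hj1 : 1 ≤ I.card :=
            Finset.card_pos.mpr (Finset.nonempty_iff_ne_empty.mpr hIne)
          have hjm : I.card ≤ m := hR''card ▸ Finset.card_le_card hIR''
          have hjs : I.card ≤ s := Finset.card_le_card hIR'
          have hcard' : (R' \ I).card = s - I.card := Finset.card_sdiff_of_subset hIR'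
          have hih := ih (R' \ I) ((Finset.sdiff_subset).trans hR'R) (by omega)
          have huv : m - 1 ≤ uval ((R' \ I).card + 1) := by
            apply Nat.le_findGreatest (P := fun k => tri k ≤ (R' \ I).card + 1)
            · omega
            · show tri (m - 1) ≤ (R' \ I).card + 1
              omega
          omega
      omega
    · -- m = 1 : superadditivity suffices
      have h2 : scost G (Finset.univ \ R) + ((Finset.univ \ R) ∪ R').card ≤
          scost G ((Finset.univ \ R) ∪ R') + (Finset.univ \ R).card :=
        scost_superadd G Finset.subset_union_left
      omega


/-- If `v` is a stem in a forest `T` with `r ≥ 1` leaf neighbors (forming the set `R`)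
and `r + 1` is triangular, then `s̊(T) ≥ s̊(T - R) + r + u_r`. -/
theorem stmt9 (G : SimpleGraph V) (hG : G.IsAcyclic) (v : V) (R : Finset V)
    (hv : IsStem G v) (hR : ∀ w, w ∈ R ↔ (G.Adj v w ∧ IsLeaf G w)) (hr : 1 ≤ R.card)
    (htri : IsTriangular (R.card + 1)) :
    scost G (Finset.univ \ R) + R.card + uval R.card ≤ scost G Finset.univ := by
  classical
  have hvR : v ∉ R := fun h => G.irrefl ((hR v).mp h).1
  have hadj : ∀ w ∈ R, G.Adj v w := fun w hw => ((hR w).mp hw).1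
  -- the pendant-count hypothesis
  have hpend : ((Finset.univ \ R).filter (fun w => G.Adj v w)).card ≤ 1 := by
    have hsub : (Finset.univ \ R).filter (fun w => G.Adj v w) ⊆
        Finset.univ.filter (fun w => G.Adj v w ∧ ¬ IsLeaf G w) := by
      intro w hw
      rw [Finset.mem_filter, Finset.mem_sdiff] at hw
      rw [Finset.mem_filter]
      refine ⟨Finset.mem_univ w, hw.2, fun hleaf => hw.1.2 ((hR w).mpr ⟨hw.2, hleaf⟩)⟩
    have hset : {w | G.Adj v w ∧ ¬ IsLeaf G w} =
        ↑(Finset.univ.filter (fun w => G.Adj v w ∧ ¬ IsLeaf G w)) := by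
      ext w; simp
    have hcard : (Finset.univ.filter (fun w => G.Adj v w ∧ ¬ IsLeaf G w)).card ≤ 1 := by
      have := hv.2
      rw [hset, Set.ncard_coe_finset] at this
      exact this
    exact le_trans (Finset.card_le_card hsub) hcard
  -- apply the key lemma with R' = R
  have hkey := key_lemma G v R hvR hadj hpend R.card R (le_refl _) (le_refl _)
  rw [Finset.sdiff_union_of_subset (Finset.subset_univ R)] at hkey
  -- uval (R.card + 1) = uval R.card + 1
  obtain ⟨k, hk⟩ := htri
  have hk1 : 1 ≤ k := by
    rcases Nat.eq_zero_or_pos k with rfl | h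
    · simp [tri] at hk
    · exact h
  have htsk : tri ((k - 1) + 1) = tri (k - 1) + ((k - 1) + 1) := tri_succ (k - 1)
  have hkk : (k - 1) + 1 = k := by omega
  rw [hkk] at htsk
  have hlek : k ≤ tri k := le_tri k
  have hlek1 : k - 1 ≤ tri (k - 1) := le_tri (k - 1)
  have h1 : uval (R.card + 1) = k := by
    have hge : k ≤ uval (R.card + 1) :=
      Nat.le_findGreatest (P := fun j => tri j ≤ R.card + 1) (by omega) (by omega)
    have hle : uval (R.card + 1) ≤ k := by
      apply uval_le
      rw [tri_succ]
      omega
    omega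
  have h2 : uval R.card = k - 1 := by
    have hge : k - 1 ≤ uval R.card :=
      Nat.le_findGreatest (P := fun j => tri j ≤ R.card) (by omega) (by omega)
    have hle : uval R.card ≤ k - 1 := by
      apply uval_le
      rw [hkk]
      omega
    omega
  omega
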